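/- Let f(x) = ax/(x²+a) over ℚ_p with a ≠ 0, A = |a|_p, and c with |c|_p = r, r² < A. Set ρ(r) = r³/A. Then for every n ≥ 1, |f^{n+1}(c) − f^n(c)|_p = ρ(r), and f maps the ball V_{ρ(r)}(c) onto itself: f(V_{ρ(r)}(c)) = V_{ρ(r)}(c). -/

import Mathlib

section aux
variable {p : ℕ} [Fact p.Prime] {a : ℚ_[p]} {r : ℝ}

lemma denom_norm (hrA : r ^ 2 < ‖a‖) (x : ℚ_[p]) (hx : ‖x‖ ≤ r) :
    ‖x ^ 2 + a‖ = ‖a‖ := by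
  have hx2 : ‖x ^ 2‖ < ‖a‖ := by
    rw [norm_pow]
    calc ‖x‖ ^ 2 ≤ r ^ 2 := by
          have : (0:ℝ) ≤ ‖x‖ := norm_nonneg _
          nlinarith
      _ < ‖a‖ := hrA
  rw [Padic.add_eq_max_of_ne (ne_of_lt hx2), max_eq_right hx2.le]

lemma denom_ne (ha : a ≠ 0) (hrA : r ^ 2 < ‖a‖) (x : ℚ_[p]) (hx : ‖x‖ ≤ r) :
    x ^ 2 + a ≠ 0 := by
  intro h
  have := denom_norm hrA x hx
  rw [h, norm_zero] at this
  exact ha (norm_eq_zero.mp this.symm)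

/-- f(x) - x = -x³/(x²+a) -/
lemma f_sub_self (ha : a ≠ 0) (hrA : r ^ 2 < ‖a‖) (x : ℚ_[p]) (hx : ‖x‖ = r) :
    ‖a * x / (x ^ 2 + a) - x‖ = r ^ 3 / ‖a‖ := by
  have hne := denom_ne ha hrA x hx.le
  have key : a * x / (x ^ 2 + a) - x = -(x ^ 3) / (x ^ 2 + a) := by
    field_simp; ring
  rw [key, norm_div, norm_neg, norm_pow, hx, denom_norm hrA x hx.le]

lemma f_norm (ha : a ≠ 0) (hrA : r ^ 2 < ‖a‖) (x : ℚ_[p]) (hx : ‖x‖ = r) :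
    ‖a * x / (x ^ 2 + a)‖ = r := by
  have ha' : (0:ℝ) < ‖a‖ := norm_pos_iff.mpr ha
  rw [norm_div, norm_mul, hx, denom_norm hrA x hx.le]
  field_simp

/-- members of the small ball are on the sphere -/
lemma ball_norm (ha : a ≠ 0) (hr : 0 < r) (hrA : r ^ 2 < ‖a‖) {c : ℚ_[p]} (hc : ‖c‖ = r)
    (x : ℚ_[p]) (hx : ‖x - c‖ ≤ r ^ 3 / ‖a‖) : ‖x‖ = r := by
  have ha' : (0:ℝ) < ‖a‖ := norm_pos_iff.mpr ha
  have hρ : r ^ 3 / ‖a‖ < r := by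
    rw [div_lt_iff₀ ha']; nlinarith
  have hlt : ‖x - c‖ < ‖c‖ := by rw [hc]; exact lt_of_le_of_lt hx hρ
  have : ‖(x - c) + c‖ = max ‖x - c‖ ‖c‖ := Padic.add_eq_max_of_ne (ne_of_lt hlt)
  rw [sub_add_cancel, max_eq_right hlt.le, hc] at this
  exact this

/-- contraction estimate for g(x) = y + x³/(x²+a) -/
lemma g_lip (ha : a ≠ 0) (hr : 0 < r) (hrA : r ^ 2 < ‖a‖) (x₁ x₂ : ℚ_[p])
    (h1 : ‖x₁‖ ≤ r) (h2 : ‖x₂‖ ≤ r) :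
    ‖x₁ ^ 3 / (x₁ ^ 2 + a) - x₂ ^ 3 / (x₂ ^ 2 + a)‖ ≤ r ^ 2 / ‖a‖ * ‖x₁ - x₂‖ := by
  have ha' : (0:ℝ) < ‖a‖ := norm_pos_iff.mpr ha
  have d1 := denom_ne ha hrA x₁ h1
  have d2 := denom_ne ha hrA x₂ h2
  have key : x₁ ^ 3 / (x₁ ^ 2 + a) - x₂ ^ 3 / (x₂ ^ 2 + a) =
      (x₁ - x₂) * (x₁ ^ 2 * x₂ ^ 2 + a * (x₁ ^ 2 + x₁ * x₂ + x₂ ^ 2)) /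
        ((x₁ ^ 2 + a) * (x₂ ^ 2 + a)) := by
    field_simp; ring
  have hnum : ‖x₁ ^ 2 * x₂ ^ 2 + a * (x₁ ^ 2 + x₁ * x₂ + x₂ ^ 2)‖ ≤ ‖a‖ * r ^ 2 := by
    refine (Padic.nonarchimedean _ _).trans (max_le ?_ ?_)
    · rw [norm_mul, norm_pow, norm_pow]
      have e1 : ‖x₁‖ ^ 2 ≤ r ^ 2 := by nlinarith [norm_nonneg x₁]
      have e2 : ‖x₂‖ ^ 2 ≤ r ^ 2 := by nlinarith [norm_nonneg x₂]
      calc ‖x₁‖ ^ 2 * ‖x₂‖ ^ 2 ≤ r ^ 2 * r ^ 2 := by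
            exact mul_le_mul e1 e2 (by positivity) (by positivity)
        _ ≤ ‖a‖ * r ^ 2 := by nlinarith
    · rw [norm_mul]
      have h3 : ‖x₁ ^ 2 + x₁ * x₂ + x₂ ^ 2‖ ≤ r ^ 2 := by
        refine (Padic.nonarchimedean _ _).trans (max_le ((Padic.nonarchimedean _ _).trans (max_le ?_ ?_)) ?_)
        · rw [norm_pow]; nlinarith [norm_nonneg x₁]
        · rw [norm_mul]; nlinarith [norm_nonneg x₁, norm_nonneg x₂]
        · rw [norm_pow]; nlinarith [norm_nonneg x₂]
      nlinarith [norm_nonneg a]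
  rw [key, norm_div, norm_mul, norm_mul, denom_norm hrA x₁ h1, denom_norm hrA x₂ h2]
  rw [div_le_iff₀ (by positivity)]
  calc ‖x₁ - x₂‖ * ‖x₁ ^ 2 * x₂ ^ 2 + a * (x₁ ^ 2 + x₁ * x₂ + x₂ ^ 2)‖
      ≤ ‖x₁ - x₂‖ * (‖a‖ * r ^ 2) := by
        exact mul_le_mul_of_nonneg_left hnum (norm_nonneg _)
    _ = r ^ 2 / ‖a‖ * ‖x₁ - x₂‖ * (‖a‖ * ‖a‖) := by field_simp

end aux

/-- For c on an invariant sphere S_r(0) (r² < A) and ρ(r) = r³/A: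
|f^{n+1}(c) − fⁿ(c)| = ρ(r) for all n ≥ 1, and f maps V_{ρ(r)}(c) onto itself. -/
theorem stmt12 (p : ℕ) [Fact p.Prime] (a : ℚ_[p]) (ha : a ≠ 0) (r : ℝ)
    (hr : 0 < r) (hrA : r ^ 2 < ‖a‖) (c : ℚ_[p]) (hc : ‖c‖ = r) :
    (∀ n : ℕ, 1 ≤ n →
      ‖(fun y : ℚ_[p] => a * y / (y ^ 2 + a))^[n + 1] c -
        (fun y : ℚ_[p] => a * y / (y ^ 2 + a))^[n] c‖ = r ^ 3 / ‖a‖) ∧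
    (fun x : ℚ_[p] => a * x / (x ^ 2 + a)) '' {x : ℚ_[p] | ‖x - c‖ ≤ r ^ 3 / ‖a‖} =
      {x : ℚ_[p] | ‖x - c‖ ≤ r ^ 3 / ‖a‖} := by
  have ha' : (0:ℝ) < ‖a‖ := norm_pos_iff.mpr ha
  set f : ℚ_[p] → ℚ_[p] := fun y => a * y / (y ^ 2 + a) with hf
  set ρ : ℝ := r ^ 3 / ‖a‖ with hρdef
  have hρ0 : 0 ≤ ρ := by positivity
  -- iterates stay on sphere
  have hsph : ∀ n : ℕ, ‖f^[n] c‖ = r := by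
    intro n
    induction n with
    | zero => simpa using hc
    | succ n ih =>
      rw [Function.iterate_succ_apply']
      exact f_norm ha hrA _ ih
  constructor
  · intro n _
    rw [Function.iterate_succ_apply']
    exact f_sub_self ha hrA _ (hsph n)
  · ext y
    simp only [Set.mem_image, Set.mem_setOf_eq]
    constructor
    · rintro ⟨x, hx, rfl⟩
      have hxr : ‖x‖ = r := ball_norm ha hr hrA hc x hx
      have : a * x / (x ^ 2 + a) - c = (a * x / (x ^ 2 + a) - x) + (x - c) := by ring
      rw [this]
      refine (Padic.nonarchimedean _ _).trans (max_le ?_ hx)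
      rw [f_sub_self ha hrA x hxr]
    · intro hy
      -- Banach fixed point for g(x) = y + x³/(x²+a) on the closed ball
      set S : Set ℚ_[p] := Metric.closedBall c ρ with hS
      have hmem_iff : ∀ x : ℚ_[p], x ∈ S ↔ ‖x - c‖ ≤ ρ := by
        intro x; rw [hS, Metric.mem_closedBall, dist_eq_norm]
      have hcS : c ∈ S := by rw [hmem_iff]; simpa using hρ0
      haveI : Nonempty S := ⟨⟨c, hcS⟩⟩
      haveI : CompleteSpace S := IsClosed.completeSpace_coe (hs := Metric.isClosed_closedBall)
      -- key facts about points in S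
      have hSr : ∀ x : ℚ_[p], x ∈ S → ‖x‖ = r := fun x hx =>
        ball_norm ha hr hrA hc x ((hmem_iff x).mp hx)
      -- distance bound between g-values
      have hgdiff : ∀ x₁ x₂ : ℚ_[p], x₁ ∈ S → x₂ ∈ S →
          ‖(y + x₁ ^ 3 / (x₁ ^ 2 + a)) - (y + x₂ ^ 3 / (x₂ ^ 2 + a))‖ ≤
            r ^ 2 / ‖a‖ * ‖x₁ - x₂‖ := by
        intro x₁ x₂ h1 h2
        have : (y + x₁ ^ 3 / (x₁ ^ 2 + a)) - (y + x₂ ^ 3 / (x₂ ^ 2 + a)) =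
            x₁ ^ 3 / (x₁ ^ 2 + a) - x₂ ^ 3 / (x₂ ^ 2 + a) := by ring
        rw [this]
        exact g_lip ha hr hrA x₁ x₂ (hSr x₁ h1).le (hSr x₂ h2).le
      have hK1 : r ^ 2 / ‖a‖ < 1 := by rw [div_lt_one ha']; exact hrA
      have hK0 : 0 ≤ r ^ 2 / ‖a‖ := by positivity
      -- g maps S to S
      have hgmem : ∀ x : ℚ_[p], x ∈ S → (y + x ^ 3 / (x ^ 2 + a)) ∈ S := by
        intro x hx
        rw [hmem_iff]
        have hgc : ‖(y + c ^ 3 / (c ^ 2 + a)) - c‖ ≤ ρ := by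
          have hfc : ‖f c - c‖ = ρ := f_sub_self ha hrA c hc
          have : (y + c ^ 3 / (c ^ 2 + a)) - c = (y - c) - (f c - c) := by
            have hne := denom_ne ha hrA c hc.le
            rw [hf]; field_simp; ring
          rw [this, sub_eq_add_neg]
          refine (Padic.nonarchimedean _ _).trans (max_le hy ?_)
          rw [norm_neg, hfc]
        have step : ‖(y + x ^ 3 / (x ^ 2 + a)) - (y + c ^ 3 / (c ^ 2 + a))‖ ≤ ρ := by
          refine (hgdiff x c hx hcS).trans ?_
          calc r ^ 2 / ‖a‖ * ‖x - c‖ ≤ 1 * ρ := by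
                exact mul_le_mul hK1.le ((hmem_iff x).mp hx) (norm_nonneg _) zero_le_one
            _ = ρ := one_mul ρ
        have : (y + x ^ 3 / (x ^ 2 + a)) - c =
            ((y + x ^ 3 / (x ^ 2 + a)) - (y + c ^ 3 / (c ^ 2 + a))) +
            ((y + c ^ 3 / (c ^ 2 + a)) - c) := by ring
        rw [this]
        exact (Padic.nonarchimedean _ _).trans (max_le step hgc)
      set G : S → S := fun x => ⟨y + (x : ℚ_[p]) ^ 3 / ((x : ℚ_[p]) ^ 2 + a), hgmem x x.2⟩
        with hG
      have hcontr : ContractingWith ⟨r ^ 2 / ‖a‖, hK0⟩ G := by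
        constructor
        · exact_mod_cast hK1
        · refine LipschitzWith.of_dist_le_mul fun x₁ x₂ => ?_
          rw [Subtype.dist_eq, Subtype.dist_eq, dist_eq_norm, dist_eq_norm]
          exact hgdiff x₁ x₂ x₁.2 x₂.2
      obtain ⟨x, hxfix⟩ : ∃ x : S, Function.IsFixedPt G x :=
        ⟨ContractingWith.fixedPoint G hcontr, ContractingWith.fixedPoint_isFixedPt hcontr⟩
      -- x is a fixed point of G
      have hxS : (x : ℚ_[p]) ∈ S := x.2
      have hxeq : y + (x : ℚ_[p]) ^ 3 / ((x : ℚ_[p]) ^ 2 + a) = (x : ℚ_[p]) := by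
        have := congrArg (Subtype.val) hxfix
        exact this
      refine ⟨x, (hmem_iff x).mp hxS, ?_⟩
      have hxr : ‖(x : ℚ_[p])‖ = r := hSr x hxS
      have hne := denom_ne ha hrA (x : ℚ_[p]) hxr.le
      have : a * (x : ℚ_[p]) / ((x : ℚ_[p]) ^ 2 + a) =
          (x : ℚ_[p]) - (x : ℚ_[p]) ^ 3 / ((x : ℚ_[p]) ^ 2 + a) := by
        field_simp; ring
      show a * (x : ℚ_[p]) / ((x : ℚ_[p]) ^ 2 + a) = y
      rw [this]
      exact (eq_sub_of_add_eq hxeq).symm
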